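/- Let G be a graph with an edge {x,y}, and let G' be the graph on V(G)\{x,y} with edge set E(G\{x,y}) ∪ {{a,b} : a ∈ N_G(x), b ∈ N_G(y), a ≠ b, a,b ∉ {x,y}}. Then (I(G)^{[2]} : xy) = I(G'). -/

import Mathlib

open MvPolynomial

noncomputable section

/-- The product of the two variables corresponding to the endpoints of an edge. -/
def edgeProd (K : Type*) [CommSemiring K] {V : Type*} (e : Sym2 V) : MvPolynomial V K :=
  Sym2.lift ⟨fun a b => X a * X b, fun a b => mul_comm _ _⟩ e

/-- The edge ideal of a simple graph. -/
def edgeIdeal (K : Type*) [CommSemiring K] {V : Type*} (G : SimpleGraph V) :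
    Ideal (MvPolynomial V K) :=
  Ideal.span {p | ∃ e ∈ G.edgeSet, p = edgeProd K e}

/-- A finite set of edges of `G` forming a matching (pairwise disjoint edges). -/
def IsMatchingSet {V : Type*} (G : SimpleGraph V) (M : Finset (Sym2 V)) : Prop :=
  (↑M : Set (Sym2 V)) ⊆ G.edgeSet ∧
    (↑M : Set (Sym2 V)).Pairwise fun e f => ∀ v, v ∈ e → v ∉ f

/-- The matching number of a graph: the maximum size of a matching. -/
def matchingNumber {V : Type*} (G : SimpleGraph V) : ℕ :=
  sSup {k | ∃ M : Finset (Sym2 V), IsMatchingSet G M ∧ M.card = k}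

/-- The ideal generated by the squarefree monomials `∏_{e ∈ M} x_e` over all
`k`-matchings `M` of `G`; this is the `k`-th squarefree (matching) power of the edge ideal. -/
def matchingPow (K : Type*) [CommSemiring K] {V : Type*} (G : SimpleGraph V) (k : ℕ) :
    Ideal (MvPolynomial V K) :=
  Ideal.span {p | ∃ M : Finset (Sym2 V), IsMatchingSet G M ∧ M.card = k ∧
    p = ∏ e ∈ M, edgeProd K e}

/-- The `k`-th squarefree power of an ideal: the ideal generated by all squarefree
monomials belonging to `I ^ k`. -/
def sqfreePow {K V : Type*} [CommSemiring K] (I : Ideal (MvPolynomial V K)) (k : ℕ) :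
    Ideal (MvPolynomial V K) :=
  Ideal.span {p | (∃ A : Finset V, p = ∏ v ∈ A, X v) ∧ p ∈ I ^ k}

/-- Deleting a set of vertices from a graph (keeping the ambient vertex type:
all edges meeting `W` are removed). -/
def delVerts {V : Type*} (G : SimpleGraph V) (W : Set V) : SimpleGraph V where
  Adj a b := G.Adj a b ∧ a ∉ W ∧ b ∉ W
  symm := ⟨fun a b h => ⟨h.1.symm, h.2.2, h.2.1⟩⟩
  loopless := ⟨fun a h => G.loopless.irrefl a h.1⟩

/-- The whisker graph `W(G)`: to each vertex `x` of `G` (viewed as `inl x`) one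
attaches a new pendant vertex `inr x`. -/
def whiskerGraph {V : Type*} (G : SimpleGraph V) : SimpleGraph (V ⊕ V) :=
  SimpleGraph.fromRel fun a b =>
    (∃ u v, G.Adj u v ∧ a = Sum.inl u ∧ b = Sum.inl v) ∨ (∃ u, a = Sum.inl u ∧ b = Sum.inr u)

/-- The depth of `R/I` (w.r.t. the graded maximal ideal generated by the variables),
defined as the supremum of lengths of `R/I`-regular sequences of elements of that ideal. -/
def quotDepth {K V : Type*} [Field K] (I : Ideal (MvPolynomial V K)) : ℕ :=
  sSup {n | ∃ rs : List (MvPolynomial V K), rs.length = n ∧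
    (∀ r ∈ rs, r ∈ Ideal.span (Set.range (X : V → MvPolynomial V K))) ∧
    RingTheory.Sequence.IsRegular (MvPolynomial V K ⧸ I) rs}

/-- A finite graded free resolution of an ideal `I` of a polynomial ring, with
`rk i` the rank of the `i`-th free module and `deg i t` the degree (twist) of its
`t`-th basis element. -/
structure GradedFreeResolution {K V : Type*} [Field K] (I : Ideal (MvPolynomial V K)) where
  rk : ℕ → ℕ
  deg : (i : ℕ) → Fin (rk i) → ℕ
  len : ℕ
  rk_eq_zero : ∀ i, len < i → rk i = 0
  aug : (Fin (rk 0) → MvPolynomial V K) →ₗ[MvPolynomial V K] MvPolynomial V K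
  diff : (i : ℕ) →
    (Fin (rk (i + 1)) → MvPolynomial V K) →ₗ[MvPolynomial V K] (Fin (rk i) → MvPolynomial V K)
  aug_homogeneous : ∀ s : Fin (rk 0), (aug (Pi.single s 1)).IsHomogeneous (deg 0 s)
  diff_homogeneous : ∀ i (s : Fin (rk (i + 1))) (t : Fin (rk i)),
    (diff i (Pi.single s 1) t).IsHomogeneous (deg (i + 1) s - deg i t) ∧
      (deg (i + 1) s < deg i t → diff i (Pi.single s 1) t = 0)
  range_aug : LinearMap.range aug = I
  exact_zero : LinearMap.ker aug = LinearMap.range (diff 0)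
  exact_succ : ∀ i, LinearMap.ker (diff i) = LinearMap.range (diff (i + 1))

/-- The Castelnuovo–Mumford regularity of an ideal `I` of a polynomial ring: the least
`r` such that `I` admits a finite graded free resolution all of whose `i`-th twists are
at most `r + i`. -/
noncomputable def regCM {K V : Type*} [Field K] (I : Ideal (MvPolynomial V K)) : ℕ :=
  sInf {r | ∃ F : GradedFreeResolution I, ∀ i (t : Fin (F.rk i)), F.deg i t ≤ r + i}

end


noncomputable section AuxProof
open MvPolynomial Finsupp

variable {K : Type*} [Field K] {V : Type*}

/-- exponent vector of an edge -/
def expE {V : Type*} : Sym2 V → (V →₀ ℕ) :=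
  Sym2.lift ⟨fun a b => Finsupp.single a 1 + Finsupp.single b 1, fun _ _ => add_comm _ _⟩

@[simp] lemma expE_mk (a b : V) : expE s(a,b) = Finsupp.single a 1 + Finsupp.single b 1 := rfl

lemma edgeProd_eq_monomial (e : Sym2 V) : edgeProd K e = monomial (expE e) (1:K) := by
  induction e with
  | _ a b => simp [edgeProd, expE, X, monomial_mul]

lemma mem_span_monomials (D : Set (V →₀ ℕ)) (p : MvPolynomial V K) :
    p ∈ Ideal.span ((fun d => (monomial d (1:K))) '' D) ↔ ∀ m ∈ p.support, ∃ d ∈ D, d ≤ m := by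
  classical
  constructor
  · intro hp
    refine Submodule.span_induction ?_ ?_ ?_ ?_ hp
    · rintro q ⟨d, hd, rfl⟩ m hm
      rw [support_monomial, if_neg one_ne_zero] at hm
      simp only [Finset.mem_singleton] at hm
      exact ⟨d, hd, hm ▸ le_refl d⟩
    · simp
    · intro q r _ _ hq hr m hm
      have := MvPolynomial.support_add hm
      rcases Finset.mem_union.mp this with h | h
      exacts [hq m h, hr m h]
    · intro q r _ hr m hm
      have := MvPolynomial.support_mul q r hm
      rcases Finset.mem_add.mp this with ⟨m₁, _, m₂, h₂, rfl⟩
      obtain ⟨d, hd, hdm⟩ := hr m₂ h₂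
      exact ⟨d, hd, hdm.trans le_add_self⟩
  · intro h
    rw [p.as_sum]
    refine Ideal.sum_mem _ fun m hm => ?_
    obtain ⟨d, hd, hdm⟩ := h m hm
    have : (monomial m (coeff m p) : MvPolynomial V K)
        = monomial (m - d) (coeff m p) * monomial d 1 := by
      rw [monomial_mul, mul_one, tsub_add_cancel_of_le hdm]
    rw [this]
    exact Ideal.mul_mem_left _ _ (Ideal.subset_span ⟨d, hd, rfl⟩)

lemma mem_support_monomial_mul (d : V →₀ ℕ) (f : MvPolynomial V K) (m : V →₀ ℕ) :
    m ∈ (monomial d (1:K) * f).support ↔ ∃ m₀ ∈ f.support, m = d + m₀ := by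
  classical
  constructor
  · intro hm
    have := MvPolynomial.support_mul _ f hm
    rcases Finset.mem_add.mp this with ⟨m₁, h₁, m₂, h₂, rfl⟩
    rw [support_monomial, if_neg one_ne_zero, Finset.mem_singleton] at h₁
    exact ⟨m₂, h₂, by rw [h₁]⟩
  · rintro ⟨m₀, hm₀, rfl⟩
    rw [MvPolynomial.mem_support_iff, coeff_monomial_mul, one_mul]
    exact MvPolynomial.mem_support_iff.mp hm₀

lemma prod_monomial_one {α : Type*} (s : Finset α) (g : α → (V →₀ ℕ)) :
    (∏ a ∈ s, monomial (g a) (1:K)) = monomial (∑ a ∈ s, g a) (1:K) := by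
  classical
  induction s using Finset.induction with
  | empty => simp [monomial_eq]
  | insert _ _ h ih => rw [Finset.prod_insert h, Finset.sum_insert h, ih, monomial_mul, one_mul]

lemma prod_edgeProd (M : Finset (Sym2 V)) :
    (∏ e ∈ M, edgeProd K e) = monomial (∑ e ∈ M, expE e) (1:K) := by
  rw [← prod_monomial_one]
  exact Finset.prod_congr rfl fun e _ => edgeProd_eq_monomial e

lemma matchingPow_eq_span (G : SimpleGraph V) (k : ℕ) :
    matchingPow K G k = Ideal.span ((fun d => (monomial d (1:K))) ''
      {d | ∃ M : Finset (Sym2 V), IsMatchingSet G M ∧ M.card = k ∧ d = ∑ e ∈ M, expE e}) := by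
  unfold matchingPow
  congr 1
  ext p
  constructor
  · rintro ⟨M, h1, h2, rfl⟩
    exact ⟨∑ e ∈ M, expE e, ⟨M, h1, h2, rfl⟩, (prod_edgeProd M).symm⟩
  · rintro ⟨d, ⟨M, h1, h2, rfl⟩, rfl⟩
    exact ⟨M, h1, h2, (prod_edgeProd M).symm⟩

lemma edgeIdeal_eq_span (H : SimpleGraph V) :
    edgeIdeal K H = Ideal.span ((fun d => (monomial d (1:K))) '' (expE '' H.edgeSet)) := by
  unfold edgeIdeal
  congr 1
  ext p
  constructor
  · rintro ⟨e, he, rfl⟩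
    exact ⟨expE e, ⟨e, he, rfl⟩, (edgeProd_eq_monomial e).symm⟩
  · rintro ⟨d, ⟨e, he, rfl⟩, rfl⟩
    exact ⟨e, he, (edgeProd_eq_monomial e).symm⟩

lemma helper1 {a b x y : V} {m : V →₀ ℕ} (hax : a ≠ x) (hay : a ≠ y) (hbx : b ≠ x) (hby : b ≠ y)
    (h : Finsupp.single a 1 + Finsupp.single b 1 ≤ Finsupp.single x 1 + Finsupp.single y 1 + m) :
    Finsupp.single a 1 + Finsupp.single b 1 ≤ m := by
  classical
  rw [Finsupp.le_def] at h ⊢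
  intro v
  have hv := h v
  simp only [Finsupp.add_apply, Finsupp.single_apply] at hv ⊢
  split_ifs at hv ⊢ <;> first | omega | simp_all

lemma pairMatching {G : SimpleGraph V} {a b c d : V} (h1 : G.Adj a b) (h2 : G.Adj c d)
    (hac : a ≠ c) (had : a ≠ d) (hbc : b ≠ c) (hbd : b ≠ d) :
    ∃ M : Finset (Sym2 V), IsMatchingSet G M ∧ M.card = 2 ∧
      (∑ e ∈ M, expE e) = Finsupp.single a 1 + Finsupp.single b 1 +
        (Finsupp.single c 1 + Finsupp.single d 1) := by
  classical
  have hne : s(a,b) ≠ s(c,d) := by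
    rw [Ne, Sym2.eq_iff]; rintro (⟨rfl,rfl⟩|⟨rfl,rfl⟩) <;> simp_all
  refine ⟨{s(a,b), s(c,d)}, ⟨?_, ?_⟩, Finset.card_pair hne, by rw [Finset.sum_pair hne]; rfl⟩
  · intro g hg
    simp only [Finset.coe_insert, Finset.coe_singleton, Set.mem_insert_iff,
      Set.mem_singleton_iff] at hg
    rcases hg with rfl | rfl
    exacts [h1, h2]
  · have key : ∀ v, v ∈ s(a,b) → v ∉ s(c,d) := by
      intro v hv hv2
      rw [Sym2.mem_iff] at hv hv2
      rcases hv with rfl|rfl <;> rcases hv2 with rfl|rfl <;> simp_all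
    intro g₁ hg₁ g₂ hg₂ hne12
    simp only [Finset.coe_insert, Finset.coe_singleton, Set.mem_insert_iff,
      Set.mem_singleton_iff] at hg₁ hg₂
    rcases hg₁ with rfl|rfl <;> rcases hg₂ with rfl|rfl
    · exact absurd rfl hne12
    · exact key
    · exact fun v hv hv2 => key v hv2 hv
    · exact absurd rfl hne12

lemma keyMain (G : SimpleGraph V) (x y : V) (hxy : G.Adj x y) (m : V →₀ ℕ) :
    (∃ d : V →₀ ℕ,
        (∃ M : Finset (Sym2 V), IsMatchingSet G M ∧ M.card = 2 ∧ d = ∑ e ∈ M, expE e) ∧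
          d ≤ Finsupp.single x 1 + Finsupp.single y 1 + m) ↔
      ∃ e ∈ (SimpleGraph.fromRel fun a b =>
          (delVerts G {x, y}).Adj a b ∨
            (a ∈ G.neighborSet x ∧ b ∈ G.neighborSet y ∧ a ≠ b ∧
              a ∉ ({x, y} : Set V) ∧ b ∉ ({x, y} : Set V))).edgeSet, expE e ≤ m := by
  classical
  have hxyne : x ≠ y := hxy.ne
  have hnotmem : ∀ {u : V}, u ≠ x → u ≠ y → u ∉ ({x, y} : Set V) := by
    intro u h1 h2 hu
    rcases hu with rfl | rfl
    exacts [h1 rfl, h2 rfl]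
  have hnotmem' : ∀ {u : V}, u ∉ ({x, y} : Set V) → u ≠ x ∧ u ≠ y := by
    intro u hu
    exact ⟨fun h => hu (by simp [h]), fun h => hu (by simp [h])⟩
  constructor
  · rintro ⟨d, ⟨M, ⟨hsub, hpair⟩, hcard, rfl⟩, hle⟩
    obtain ⟨e, f, hef, rfl⟩ := Finset.card_eq_two.mp hcard
    rw [Finset.sum_pair hef] at hle
    have he : e ∈ G.edgeSet := hsub (by simp)
    have hf : f ∈ G.edgeSet := hsub (by simp)
    have hd : ∀ v, v ∈ e → v ∉ f := hpair (by simp) (by simp) hef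
    have type1 : ∀ c d : V, G.Adj c d → c ≠ x → c ≠ y → d ≠ x → d ≠ y →
        Finsupp.single c 1 + Finsupp.single d 1 ≤
          Finsupp.single x 1 + Finsupp.single y 1 + m →
        (∃ e ∈ (SimpleGraph.fromRel fun a b =>
            (delVerts G {x, y}).Adj a b ∨
              (a ∈ G.neighborSet x ∧ b ∈ G.neighborSet y ∧ a ≠ b ∧
                a ∉ ({x, y} : Set V) ∧ b ∉ ({x, y} : Set V))).edgeSet, expE e ≤ m) := by
      intro c d hcd hcx hcy hdx hdy hle2
      refine ⟨s(c,d), ?_, by simpa using helper1 hcx hcy hdx hdy hle2⟩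
      rw [SimpleGraph.mem_edgeSet, SimpleGraph.fromRel_adj]
      exact ⟨hcd.ne, Or.inl (Or.inl (show G.Adj c d ∧ c ∉ ({x, y} : Set V) ∧ d ∉ ({x, y} : Set V) from ⟨hcd, hnotmem hcx hcy, hnotmem hdx hdy⟩))⟩
    have type2 : ∀ a b : V, G.Adj x a → G.Adj y b → a ≠ b → a ≠ y → b ≠ x →
        Finsupp.single a 1 + Finsupp.single b 1 ≤ m →
        (∃ e ∈ (SimpleGraph.fromRel fun a b =>
            (delVerts G {x, y}).Adj a b ∨
              (a ∈ G.neighborSet x ∧ b ∈ G.neighborSet y ∧ a ≠ b ∧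
                a ∉ ({x, y} : Set V) ∧ b ∉ ({x, y} : Set V))).edgeSet, expE e ≤ m) := by
      intro a b hxa hyb hab hay hbx hle2
      refine ⟨s(a,b), ?_, by simpa using hle2⟩
      rw [SimpleGraph.mem_edgeSet, SimpleGraph.fromRel_adj]
      exact ⟨hab, Or.inl (Or.inr ⟨hxa, hyb, hab,
        hnotmem hxa.ne' hay, hnotmem hbx hyb.ne'⟩)⟩
    by_cases hxe : x ∈ e
    · have hxf : x ∉ f := hd x hxe
      by_cases hye : y ∈ e
      · -- f avoids x and y
        have hyf : y ∉ f := hd y hye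
        obtain ⟨c, d⟩ := f
        rw [Sym2.mem_iff] at hxf hyf
        push_neg at hxf hyf
        refine type1 c d hf (Ne.symm hxf.1) (Ne.symm hyf.1) (Ne.symm hxf.2) (Ne.symm hyf.2) ?_
        calc (Finsupp.single c 1 + Finsupp.single d 1 : V →₀ ℕ) = expE s(c,d) := rfl
          _ ≤ expE e + expE s(c,d) := le_add_self
          _ ≤ _ := hle
      · by_cases hyf : y ∈ f
        · -- x ∈ e, y ∈ f
          obtain ⟨a, rfl⟩ := Sym2.mem_iff_exists.mp hxe
          obtain ⟨b, rfl⟩ := Sym2.mem_iff_exists.mp hyf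
          have hxa : G.Adj x a := he
          have hyb : G.Adj y b := hf
          have hanf := hd a (by simp)
          have hxnf := hd x (by simp)
          rw [Sym2.mem_iff] at hanf hxnf
          push_neg at hanf hxnf
          simp only [expE_mk] at hle
          have hle2 : Finsupp.single a 1 + Finsupp.single b 1 ≤ m := by
            have h2 : (Finsupp.single x 1 + Finsupp.single y 1) +
                (Finsupp.single a 1 + Finsupp.single b 1) ≤
                (Finsupp.single x 1 + Finsupp.single y 1) + m := by
              refine le_trans (le_of_eq ?_) hle
              abel
            exact le_of_add_le_add_left h2
          exact type2 a b hxa hyb hanf.2 hanf.1 (Ne.symm hxnf.2) hle2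
        · -- f avoids x and y
          obtain ⟨c, d⟩ := f
          rw [Sym2.mem_iff] at hxf hyf
          push_neg at hxf hyf
          refine type1 c d hf (Ne.symm hxf.1) (Ne.symm hyf.1) (Ne.symm hxf.2) (Ne.symm hyf.2) ?_
          calc (Finsupp.single c 1 + Finsupp.single d 1 : V →₀ ℕ) = expE s(c,d) := rfl
            _ ≤ expE e + expE s(c,d) := le_add_self
            _ ≤ _ := hle
    · by_cases hye : y ∈ e
      · have hyf : y ∉ f := hd y hye
        by_cases hxf : x ∈ f
        · -- y ∈ e, x ∈ f
          obtain ⟨a, rfl⟩ := Sym2.mem_iff_exists.mp hye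
          obtain ⟨b, rfl⟩ := Sym2.mem_iff_exists.mp hxf
          have hya : G.Adj y a := he
          have hxb : G.Adj x b := hf
          have hanf := hd a (by simp)
          have hynf := hd y (by simp)
          rw [Sym2.mem_iff] at hanf hynf
          push_neg at hanf hynf
          simp only [expE_mk] at hle
          have hle2 : Finsupp.single b 1 + Finsupp.single a 1 ≤ m := by
            have h2 : (Finsupp.single x 1 + Finsupp.single y 1) +
                (Finsupp.single b 1 + Finsupp.single a 1) ≤
                (Finsupp.single x 1 + Finsupp.single y 1) + m := by
              refine le_trans (le_of_eq ?_) hle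
              abel
            exact le_of_add_le_add_left h2
          exact type2 b a hxb hya (Ne.symm hanf.2) (Ne.symm hynf.2) hanf.1 hle2
        · obtain ⟨c, d⟩ := f
          rw [Sym2.mem_iff] at hxf hyf
          push_neg at hxf hyf
          refine type1 c d hf (Ne.symm hxf.1) (Ne.symm hyf.1) (Ne.symm hxf.2) (Ne.symm hyf.2) ?_
          calc (Finsupp.single c 1 + Finsupp.single d 1 : V →₀ ℕ) = expE s(c,d) := rfl
            _ ≤ expE e + expE s(c,d) := le_add_self
            _ ≤ _ := hle
      · -- e avoids x and y
        obtain ⟨c, d⟩ := e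
        rw [Sym2.mem_iff] at hxe hye
        push_neg at hxe hye
        refine type1 c d he (Ne.symm hxe.1) (Ne.symm hye.1) (Ne.symm hxe.2) (Ne.symm hye.2) ?_
        calc (Finsupp.single c 1 + Finsupp.single d 1 : V →₀ ℕ) = expE s(c,d) := rfl
          _ ≤ expE s(c,d) + expE f := le_self_add
          _ ≤ _ := hle
  · rintro ⟨e, hemem, hle⟩
    obtain ⟨a, b⟩ := e
    rw [SimpleGraph.mem_edgeSet, SimpleGraph.fromRel_adj] at hemem
    simp only [expE_mk] at hle
    obtain ⟨hab, hr⟩ := hemem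
    simp only [delVerts] at hr
    rcases hr with (⟨hGab, hans, hbns⟩ | ⟨hna, hnb, _, hans, hbns⟩) |
        (⟨hGba, hbns, hans⟩ | ⟨hnb, hna, _, hbns, hans⟩)
    · obtain ⟨hax, hay⟩ := hnotmem' hans
      obtain ⟨hbx, hby⟩ := hnotmem' hbns
      obtain ⟨M, h1, h2, hsum⟩ := pairMatching hGab hxy hax hay hbx hby
      refine ⟨_, ⟨M, h1, h2, rfl⟩, ?_⟩
      rw [hsum, show Finsupp.single a 1 + Finsupp.single b 1 +
          (Finsupp.single x 1 + Finsupp.single y 1) =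
          (Finsupp.single x 1 + Finsupp.single y 1) +
          (Finsupp.single a 1 + Finsupp.single b 1) from add_comm _ _]
      exact add_le_add_right hle _
    · obtain ⟨hax, hay⟩ := hnotmem' hans
      obtain ⟨hbx, hby⟩ := hnotmem' hbns
      have hxa : G.Adj x a := hna
      have hyb : G.Adj y b := hnb
      obtain ⟨M, h1, h2, hsum⟩ := pairMatching hxa.symm hyb.symm hab hay (Ne.symm hbx) hxyne
      refine ⟨_, ⟨M, h1, h2, rfl⟩, ?_⟩
      rw [hsum, show Finsupp.single a 1 + Finsupp.single x 1 +
          (Finsupp.single b 1 + Finsupp.single y 1) =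
          (Finsupp.single x 1 + Finsupp.single y 1) +
          (Finsupp.single a 1 + Finsupp.single b 1) by abel]
      exact add_le_add_right hle _
    · obtain ⟨hax, hay⟩ := hnotmem' hans
      obtain ⟨hbx, hby⟩ := hnotmem' hbns
      obtain ⟨M, h1, h2, hsum⟩ := pairMatching hGba.symm hxy hax hay hbx hby
      refine ⟨_, ⟨M, h1, h2, rfl⟩, ?_⟩
      rw [hsum, show Finsupp.single a 1 + Finsupp.single b 1 +
          (Finsupp.single x 1 + Finsupp.single y 1) =
          (Finsupp.single x 1 + Finsupp.single y 1) +
          (Finsupp.single a 1 + Finsupp.single b 1) from add_comm _ _]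
      exact add_le_add_right hle _
    · obtain ⟨hax, hay⟩ := hnotmem' hans
      obtain ⟨hbx, hby⟩ := hnotmem' hbns
      have hxb : G.Adj x b := hnb
      have hya : G.Adj y a := hna
      obtain ⟨M, h1, h2, hsum⟩ := pairMatching hxb.symm hya.symm (Ne.symm hab) hby (Ne.symm hax) hxyne
      refine ⟨_, ⟨M, h1, h2, rfl⟩, ?_⟩
      rw [hsum, show Finsupp.single b 1 + Finsupp.single x 1 +
          (Finsupp.single a 1 + Finsupp.single y 1) =
          (Finsupp.single x 1 + Finsupp.single y 1) +
          (Finsupp.single a 1 + Finsupp.single b 1) by abel]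
      exact add_le_add_right hle _

end AuxProof

/-- `(I(G)^{[2]} : xy) = I(G')` where `G'` has vertex set `V(G) \ {x,y}` and edge
set `E(G \ {x,y}) ∪ {{a,b} : a ∈ N_G(x), b ∈ N_G(y), a ≠ b, a,b ∉ {x,y}}`. -/
theorem matchingPow_two_colon_edge {K : Type*} [Field K] {V : Type*} [Fintype V]
    (G : SimpleGraph V) (x y : V) (hxy : G.Adj x y) :
    Submodule.colon (matchingPow K G 2) (Ideal.span {(X x * X y : MvPolynomial V K)}) =
      edgeIdeal K
        (SimpleGraph.fromRel fun a b =>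
          (delVerts G {x, y}).Adj a b ∨
            (a ∈ G.neighborSet x ∧ b ∈ G.neighborSet y ∧ a ≠ b ∧
              a ∉ ({x, y} : Set V) ∧ b ∉ ({x, y} : Set V))) := by
  classical
  ext p
  rw [Ideal.colon_span, Submodule.mem_colon_singleton, matchingPow_eq_span, edgeIdeal_eq_span,
    mem_span_monomials, mem_span_monomials]
  rw [show (p • (X x * X y) : MvPolynomial V K) =
      monomial (Finsupp.single x 1 + Finsupp.single y 1) (1:K) * p by
    rw [smul_eq_mul, mul_comm, show (X x * X y : MvPolynomial V K) =
      monomial (Finsupp.single x 1 + Finsupp.single y 1) (1:K) by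
        simp [X, monomial_mul]]]
  constructor
  · intro h m hm
    obtain ⟨d, hd, hdm⟩ := h _ ((mem_support_monomial_mul _ _ _).mpr ⟨m, hm, rfl⟩)
    obtain ⟨e, he, hle⟩ := (keyMain G x y hxy m).mp ⟨d, hd, hdm⟩
    exact ⟨expE e, ⟨e, he, rfl⟩, hle⟩
  · intro h m' hm'
    obtain ⟨m, hm, rfl⟩ := (mem_support_monomial_mul _ _ _).mp hm'
    obtain ⟨d, ⟨e, he, rfl⟩, hle⟩ := h m hm
    exact (keyMain G x y hxy m).mpr ⟨e, he, hle⟩
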